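/- Let 0 < ρ ≤ 2, −π/2 < χ < −π/6, and K > 0. Consider the equilibrium system: ρcosχ·x₂x₃ − 2Kx₁x₂ + (ρsinχ−1)x₁x₃ = λx₁; ρcosχ·x₁x₃ − K(x₁²−x₂²) − (ρsinχ+1)x₂x₃ = λx₂; ρcosχ·x₁x₂ − (x₂²−x₃²) + (1/2)(ρsinχ−1)(x₁²−x₂²) = λx₃; x₁²+x₂²+x₃² = 1. Then this system has a solution (x₁,x₂,x₃,λ) with x₂ = 0 and x₁ ≠ 0 if and only if K = ρcosχ·√((1−ρsinχ)/(2(2−ρsinχ))). Moreover, every such solution satisfies x₁² = 2(2−ρsinχ)/(5−3ρsinχ), x₃² = (1−ρsinχ)/(5−3ρsinχ), λ² = (1−ρsinχ)³/(5−3ρsinχ), x₁x₃ > 0, and λx₃ < 0. -/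

import Mathlib

open Real

/-- The equilibrium system for the oriented octupolar potential with
parameters `(ρ, χ, K)`, unknowns `(x₁, x₂, x₃)` and Lagrange multiplier `lam`. -/
def EqSys (ρ χ K x₁ x₂ x₃ lam : ℝ) : Prop :=
  ρ * Real.cos χ * x₂ * x₃ - 2 * K * x₁ * x₂ + (ρ * Real.sin χ - 1) * x₁ * x₃ = lam * x₁ ∧
  ρ * Real.cos χ * x₁ * x₃ - K * (x₁ ^ 2 - x₂ ^ 2) - (ρ * Real.sin χ + 1) * x₂ * x₃ = lam * x₂ ∧
  ρ * Real.cos χ * x₁ * x₂ - (x₂ ^ 2 - x₃ ^ 2)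
      + (1 / 2) * (ρ * Real.sin χ - 1) * (x₁ ^ 2 - x₂ ^ 2) = lam * x₃ ∧
  x₁ ^ 2 + x₂ ^ 2 + x₃ ^ 2 = 1

theorem stmt8 (ρ χ K : ℝ) (hρ : 0 < ρ) (hρ2 : ρ ≤ 2)
    (hχ1 : -(π / 2) < χ) (hχ2 : χ < -(π / 6)) (hK : 0 < K) :
    ((∃ x₁ x₃ lam : ℝ, x₁ ≠ 0 ∧ EqSys ρ χ K x₁ 0 x₃ lam) ↔
      K = ρ * Real.cos χ *
        Real.sqrt ((1 - ρ * Real.sin χ) / (2 * (2 - ρ * Real.sin χ)))) ∧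
    (∀ x₁ x₃ lam : ℝ, x₁ ≠ 0 → EqSys ρ χ K x₁ 0 x₃ lam →
      x₁ ^ 2 = 2 * (2 - ρ * Real.sin χ) / (5 - 3 * ρ * Real.sin χ) ∧
      x₃ ^ 2 = (1 - ρ * Real.sin χ) / (5 - 3 * ρ * Real.sin χ) ∧
      lam ^ 2 = (1 - ρ * Real.sin χ) ^ 3 / (5 - 3 * ρ * Real.sin χ) ∧
      0 < x₁ * x₃ ∧ lam * x₃ < 0) := by
  have hπ := Real.pi_pos
  have hc : 0 < ρ * Real.cos χ :=
    mul_pos hρ (Real.cos_pos_of_mem_Ioo ⟨hχ1, by linarith⟩)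
  have hsin : Real.sin χ < 0 :=
    Real.sin_neg_of_neg_of_neg_pi_lt (by linarith) (by linarith)
  set s := ρ * Real.sin χ with hsdef
  set c := ρ * Real.cos χ with hcdef
  have hs : s < 0 := mul_neg_of_pos_of_neg hρ hsin
  have h1s : (0:ℝ) < 1 - s := by linarith
  have h2s : (0:ℝ) < 2 - s := by linarith
  have h5s : (0:ℝ) < 5 - 3 * s := by linarith
  -- goal uses `5 - 3 * ρ * Real.sin χ`; note 3 * ρ * Real.sin χ = 3 * s after set?
  -- key lemma
  have key : ∀ x₁ x₃ lam : ℝ, x₁ ≠ 0 → EqSys ρ χ K x₁ 0 x₃ lam →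
      x₁ ^ 2 = 2 * (2 - s) / (5 - 3 * s) ∧ x₃ ^ 2 = (1 - s) / (5 - 3 * s) ∧
      lam = (s - 1) * x₃ ∧ c * x₁ * x₃ = K * x₁ ^ 2 ∧ 0 < x₁ * x₃ := by
    intro x₁ x₃ lam hx₁ ⟨e1, e2, e3, e4⟩
    have hlam : lam = (s - 1) * x₃ := by
      have h : lam * x₁ = ((s - 1) * x₃) * x₁ := by linear_combination -e1
      exact mul_right_cancel₀ hx₁ h
    have e2' : c * x₁ * x₃ = K * x₁ ^ 2 := by linear_combination e2
    have h3 : (2 - s) * x₃ ^ 2 = (1 / 2) * (1 - s) * x₁ ^ 2 := by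
      linear_combination e3 + x₃ * hlam
    have h4 : (5 - 3 * s) * x₃ ^ 2 = 1 - s := by
      linear_combination 2 * h3 + (1 - s) * e4
    have hx3sq : x₃ ^ 2 = (1 - s) / (5 - 3 * s) := by
      rw [eq_div_iff h5s.ne']; linear_combination h4
    have hx1sq : x₁ ^ 2 = 2 * (2 - s) / (5 - 3 * s) := by
      have h5 : x₁ ^ 2 = 1 - x₃ ^ 2 := by linear_combination e4
      rw [h5, hx3sq, eq_div_iff h5s.ne', sub_mul, div_mul_cancel₀ _ h5s.ne']; ring
    have hx1pos : 0 < x₁ ^ 2 := by positivity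
    have h13 : x₁ * x₃ = K * x₁ ^ 2 / c := by
      rw [eq_div_iff hc.ne']
      linear_combination e2'
    refine ⟨hx1sq, hx3sq, hlam, e2', ?_⟩
    rw [h13]; positivity
  constructor
  · constructor
    · rintro ⟨x₁, x₃, lam, hx₁, hsys⟩
      obtain ⟨hx1sq, hx3sq, hlam, e2', h13⟩ := key x₁ x₃ lam hx₁ hsys
      have hx1pos : 0 < x₁ ^ 2 := by positivity
      have hsq : K ^ 2 * x₁ ^ 2 = c ^ 2 * x₃ ^ 2 := by
        apply mul_right_cancel₀ (pow_ne_zero 2 hx₁)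
        linear_combination -(c * x₁ * x₃ + K * x₁ ^ 2) * e2'
      have hK2 : K ^ 2 = c ^ 2 * ((1 - s) / (2 * (2 - s))) := by
        rw [hx1sq, hx3sq] at hsq
        rw [mul_div_assoc', mul_div_assoc', div_left_inj' h5s.ne'] at hsq
        rw [mul_div_assoc', eq_div_iff (mul_pos two_pos h2s).ne']
        linear_combination hsq
      have : K = Real.sqrt (K ^ 2) := (Real.sqrt_sq hK.le).symm
      rw [this, hK2, show c ^ 2 * ((1 - s) / (2 * (2 - s))) = c ^ 2 * ((1 - s) / (2 * (2 - s))) from rfl,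
        Real.sqrt_mul (sq_nonneg c), Real.sqrt_sq hc.le]
    · intro hKeq
      set r := (1 - s) / (2 * (2 - s)) with hrdef
      have hr : 0 < r := by positivity
      set a := 2 * (2 - s) / (5 - 3 * s) with hadef
      set b := (1 - s) / (5 - 3 * s) with hbdef
      have ha : 0 < a := by positivity
      have hb : 0 < b := by positivity
      refine ⟨Real.sqrt a, Real.sqrt b, (s - 1) * Real.sqrt b,
        by positivity, ?_, ?_, ?_, ?_⟩
      · ring
      · have hbra : Real.sqrt b = Real.sqrt r * Real.sqrt a := by
          rw [← Real.sqrt_mul hr.le]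
          congr 1
          rw [hrdef, hadef, hbdef]
          field_simp
        have hsqa : Real.sqrt a ^ 2 = a := Real.sq_sqrt ha.le
        linear_combination c * Real.sqrt a * hbra - Real.sqrt a ^ 2 * hKeq
      · have hsqa : Real.sqrt a ^ 2 = a := Real.sq_sqrt ha.le
        have hsqb : Real.sqrt b ^ 2 = b := Real.sq_sqrt hb.le
        linear_combination (2 - s) * hsqb + (1 / 2) * (s - 1) * hsqa
      · have hsqa : Real.sqrt a ^ 2 = a := Real.sq_sqrt ha.le
        have hsqb : Real.sqrt b ^ 2 = b := Real.sq_sqrt hb.le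
        have hab : a + b = 1 := by
          rw [hadef, hbdef, ← add_div, div_eq_one_iff_eq h5s.ne']; ring
        linear_combination hsqa + hsqb + hab
  · intro x₁ x₃ lam hx₁ hsys
    obtain ⟨hx1sq, hx3sq, hlam, e2', h13⟩ := key x₁ x₃ lam hx₁ hsys
    have hx3pos : 0 < x₃ ^ 2 := by rw [hx3sq]; positivity
    refine ⟨by rw [hx1sq, hsdef]; ring_nf, by rw [hx3sq, hsdef]; ring_nf, ?_, h13, ?_⟩
    · rw [hlam]
      rw [show ((s-1)*x₃)^2 = (s-1)^2 * x₃^2 by ring, hx3sq, hsdef]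
      ring_nf
    · have : lam * x₃ = (s - 1) * x₃ ^ 2 := by rw [hlam]; ring
      rw [this]; nlinarith
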